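/- For nonzero real polynomials f and g in d variables, the Newton polytope of the product satisfies N(fg) = N(f) + N(g), where the right-hand side is the Minkowski sum of the two polytopes in ℝ^d. -/

import Mathlib

open MvPolynomial Pointwise

/-- The Newton polytope of a polynomial: the convex hull in `ℝ^d` of its support. -/
noncomputable def newtonPolytope {d : ℕ} (f : MvPolynomial (Fin d) ℝ) :
    Set (Fin d → ℝ) :=
  convexHull ℝ ((fun α : Fin d →₀ ℕ => fun i => (α i : ℝ)) '' ↑f.support)

namespace NewtonAux

variable {d : ℕ}

/-- The coordinate embedding of exponent vectors into `ℝ^d`. -/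
noncomputable def φ : (Fin d →₀ ℕ) → (Fin d → ℝ) := fun α i => (α i : ℝ)

lemma φ_add (α β : Fin d →₀ ℕ) : φ (α + β) = φ α + φ β := by
  funext i; simp [φ]

lemma φ_injective : Function.Injective (φ (d := d)) := by
  intro α β h
  ext i
  exact Nat.cast_injective (congrFun h i)

/-- Uniqueness of decomposition of an extreme point of a Minkowski sum. -/
lemma extreme_decomp_unique {E : Type*} [AddCommGroup E] [Module ℝ E]
    {K L : Set E} {v a a' b b' : E}
    (hv : v ∈ (K + L).extremePoints ℝ)
    (ha : a ∈ K) (ha' : a' ∈ K) (hb : b ∈ L) (hb' : b' ∈ L)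
    (h1 : a + b = v) (h2 : a' + b' = v) : a = a' ∧ b = b' := by
  obtain ⟨hvm, hext⟩ := hv
  have hx₁ : a + b' ∈ K + L := Set.add_mem_add ha hb'
  have hx₂ : a' + b ∈ K + L := Set.add_mem_add ha' hb
  have hseg : v ∈ openSegment ℝ (a + b') (a' + b) := by
    refine ⟨1/2, 1/2, by norm_num, by norm_num, by norm_num, ?_⟩
    have key : (1/2 : ℝ) • (a + b') + (1/2 : ℝ) • (a' + b)
        = (1/2 : ℝ) • (a + b) + (1/2 : ℝ) • (a' + b') := by module
    rw [key, h1, h2, ← add_smul]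
    norm_num
  have e1 := hext hx₁ hx₂ hseg
  -- a + b' = v = a + b, so b' = b ; then a = a'
  have hb'' : b' = b := by
    have : a + b' = a + b := by rw [e1, ← h1]
    exact add_left_cancel this
  constructor
  · have : a + b = a' + b := by rw [h1, ← h2, hb'']
    exact add_right_cancel this
  · exact hb''.symm

end NewtonAux

set_option maxHeartbeats 800000 in
open NewtonAux in
/-- For nonzero polynomials `f`, `g`, the Newton polytope of the product is the
Minkowski sum of the Newton polytopes: `N(fg) = N(f) + N(g)`. -/
theorem newtonPolytope_mul {d : ℕ} (f g : MvPolynomial (Fin d) ℝ)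
    (hf : f ≠ 0) (hg : g ≠ 0) :
    newtonPolytope (f * g) = newtonPolytope f + newtonPolytope g := by

  set A : Set (Fin d → ℝ) := φ '' ↑f.support with hA
  set B : Set (Fin d → ℝ) := φ '' ↑g.support with hB
  have hNf : newtonPolytope f = convexHull ℝ A := rfl
  have hNg : newtonPolytope g = convexHull ℝ B := rfl
  have hsum : newtonPolytope f + newtonPolytope g = convexHull ℝ (A + B) := by
    rw [hNf, hNg, convexHull_add]
  apply le_antisymm
  · -- N(fg) ⊆ N(f) + N(g)
    rw [hsum]
    apply convexHull_mono
    rintro x ⟨α, hα, rfl⟩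
    have : α ∈ f.support + g.support := MvPolynomial.support_mul f g hα
    obtain ⟨β, hβ, γ, hγ, rfl⟩ := Finset.mem_add.1 this
    show φ (β + γ) ∈ A + B
    rw [φ_add]
    exact Set.add_mem_add ⟨β, hβ, rfl⟩ ⟨γ, hγ, rfl⟩
  · -- N(f) + N(g) ⊆ N(fg)
    rw [hsum]
    have hABfin : (A + B).Finite :=
      (f.support.finite_toSet.image φ).add (g.support.finite_toSet.image φ)
    have hKL : convexHull ℝ (A + B) = convexHull ℝ A + convexHull ℝ B := convexHull_add A B
    -- every extreme point of the sum polytope is in the support of f*g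
    have hext : (convexHull ℝ (A + B)).extremePoints ℝ ⊆ φ '' ↑(f * g).support := by
      intro v hv
      have hvAB : v ∈ A + B := extremePoints_convexHull_subset hv
      obtain ⟨a, ha, b, hb, hab⟩ := hvAB
      obtain ⟨α, hα, rfl⟩ := ha
      obtain ⟨β, hβ, rfl⟩ := hb
      have hv' : v ∈ (convexHull ℝ A + convexHull ℝ B).extremePoints ℝ := by
        rwa [← hKL]
      have hcoeff : MvPolynomial.coeff (α + β) (f * g)
          = MvPolynomial.coeff α f * MvPolynomial.coeff β g := by
        rw [MvPolynomial.coeff_mul]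
        apply Finset.sum_eq_single (α, β)
        · rintro ⟨α', β'⟩ hmem hne
          by_contra hne0
          have hα' : MvPolynomial.coeff α' f ≠ 0 := fun h => hne0 (by simp [h])
          have hβ' : MvPolynomial.coeff β' g ≠ 0 := fun h => hne0 (by simp [h])
          have hsum' : α' + β' = α + β := Finset.HasAntidiagonal.mem_antidiagonal.1 hmem
          have hdecomp : φ α' + φ β' = v := by
            rw [← φ_add, hsum', φ_add]; exact hab
          have hφa : φ α' ∈ convexHull ℝ A :=
            subset_convexHull ℝ A ⟨α', by simpa using hα', rfl⟩
          have hφb : φ β' ∈ convexHull ℝ B :=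
            subset_convexHull ℝ B ⟨β', by simpa using hβ', rfl⟩
          have hφa0 : φ α ∈ convexHull ℝ A := subset_convexHull ℝ A ⟨α, hα, rfl⟩
          have hφb0 : φ β ∈ convexHull ℝ B := subset_convexHull ℝ B ⟨β, hβ, rfl⟩
          obtain ⟨e1, e2⟩ := extreme_decomp_unique hv' hφa0 hφa hφb0 hφb hab hdecomp
          exact hne (by rw [φ_injective e1.symm, φ_injective e2.symm])
        · intro h
          simp at h
      have hαf : MvPolynomial.coeff α f ≠ 0 := MvPolynomial.mem_support_iff.1 hα
      have hβg : MvPolynomial.coeff β g ≠ 0 := MvPolynomial.mem_support_iff.1 hβ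
      refine ⟨α + β, ?_, by rw [show φ (α+β) = φ α + φ β from φ_add α β]; exact hab⟩
      simp only [Finset.mem_coe, MvPolynomial.mem_support_iff, hcoeff]
      exact mul_ne_zero hαf hβg
    -- now use Krein–Milman
    have hcomp : IsCompact (convexHull ℝ (A + B)) := hABfin.isCompact_convexHull ℝ
    have hconv : Convex ℝ (convexHull ℝ (A + B)) := convex_convexHull ℝ _
    have hKM := closure_convexHull_extremePoints hcomp hconv
    calc convexHull ℝ (A + B)
        = closure (convexHull ℝ ((convexHull ℝ (A + B)).extremePoints ℝ)) := hKM.symm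
      _ ⊆ closure (convexHull ℝ (φ '' ↑(f * g).support)) :=
          closure_mono (convexHull_mono hext)
      _ = newtonPolytope (f * g) :=
          IsClosed.closure_eq (((f * g).support.finite_toSet.image φ).isClosed_convexHull ℝ)
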